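/- arXiv:2307.05885 — 3 statements merged into one kernel-verified Lean document; each statement's English description precedes it below -/
import Mathlib

section
/- Let f be the endomorphism of the affine plane over the algebraic closure of F_p(t) defined by f(x,y) = (t·x, (1−t)·y), let V be the line {x + y = 1}, and let e = (1,1). Then the return set {n ≥ 0 : f^n(e) ∈ V} equals {p^n : n ≥ 0}. -/
/-- Key polynomial fact: for `p ∤ m`, `X^m + (1-X)^m = 1` in `(ZMod p)[X]` iff `m = 1`. -/
lemma aux_poly (p : ℕ) [Fact p.Prime] (m : ℕ) (hm : ¬ p ∣ m) (hm0 : m ≠ 0)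
    (h : (Polynomial.X : Polynomial (ZMod p)) ^ m + (1 - Polynomial.X) ^ m = 1) : m = 1 := by
  by_contra hm1
  have h2 : 2 ≤ m := by omega
  have := congrArg (fun q => Polynomial.coeff q 1) h
  simp only [Polynomial.coeff_add, Polynomial.coeff_X_pow, Polynomial.coeff_one] at this
  rw [if_neg (by omega), if_neg (by omega)] at this
  -- coeff 1 of (1 - X)^m is -m
  have hc : ((1 - Polynomial.X : Polynomial (ZMod p)) ^ m).coeff 1 = -(m : ZMod p) := by
    have : ((1 - Polynomial.X : Polynomial (ZMod p)) ^ m) =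
        ∑ i ∈ Finset.range (m + 1), (-Polynomial.X) ^ i * 1 ^ (m - i) * (m.choose i : Polynomial (ZMod p)) := by
      rw [sub_eq_add_neg, add_comm]
      exact add_pow _ _ _
    rw [this, Polynomial.finset_sum_coeff]
    have key : ∀ i, ((-Polynomial.X : Polynomial (ZMod p)) ^ i * 1 ^ (m - i) *
        (m.choose i : Polynomial (ZMod p))) =
        Polynomial.C ((-1) ^ i * (m.choose i : ZMod p)) * Polynomial.X ^ i := by
      intro i
      rw [neg_pow, map_mul, map_pow, map_neg, map_one, map_natCast]
      ring
    rw [Finset.sum_eq_single 1]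
    · rw [key, Polynomial.coeff_C_mul, Polynomial.coeff_X_pow, if_pos rfl]
      simp
    · intro i hi hne
      rw [key, Polynomial.coeff_C_mul, Polynomial.coeff_X_pow, if_neg (Ne.symm hne), mul_zero]
    · intro h'
      simp at h'
      omega
  rw [hc] at this
  have : (m : ZMod p) = 0 := by linear_combination -this
  exact hm ((ZMod.natCast_eq_zero_iff ..).mp this)

/-- DML fails in positive characteristic: for `f(x,y) = (t·x, (1−t)·y)` on the affine
plane over the algebraic closure of `F_p(t)`, `V = {x + y = 1}` and `e = (1,1)`,
the return set `{n : fⁿ(e) ∈ V}` is exactly the set of powers of `p`. -/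
theorem stmt0 (p : ℕ) [Fact p.Prime] :
    let k := AlgebraicClosure (RatFunc (ZMod p))
    let t : k := algebraMap (RatFunc (ZMod p)) k RatFunc.X
    let f : k × k → k × k := fun z => (t * z.1, (1 - t) * z.2)
    {n : ℕ | (f^[n] (1, 1)).1 + (f^[n] (1, 1)).2 = 1} = {m : ℕ | ∃ j : ℕ, m = p ^ j} := by
  intro k t f
  haveI : CharP (RatFunc (ZMod p)) p :=
    charP_of_injective_algebraMap (RatFunc.algebraMap_injective (ZMod p)) p
  haveI : CharP k p := charP_of_injective_algebraMap (algebraMap (RatFunc (ZMod p)) k).injective p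
  have hit : ∀ n : ℕ, f^[n] (1, 1) = (t ^ n, (1 - t) ^ n) := by
    intro n
    induction n with
    | zero => simp
    | succ n ih => rw [Function.iterate_succ_apply', ih]; show (_, _) = _; rw [pow_succ, pow_succ]; ext <;> ring
  ext n
  simp only [Set.mem_setOf_eq, hit]
  constructor
  · intro h
    have hn0 : n ≠ 0 := by
      rintro rfl
      simp at h
    set j := n.factorization p with hj
    set m := n / p ^ j with hmdef
    have hfac : p ^ j * m = n := Nat.ordProj_mul_ordCompl_eq_self n p
    have hpm : ¬ p ∣ m := Nat.not_dvd_ordCompl (Fact.out) hn0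
    have hm0 : m ≠ 0 := by
      intro h0; rw [h0, mul_zero] at hfac; exact hn0 hfac.symm
    -- reduce via Frobenius
    have hk : t ^ m + (1 - t) ^ m = 1 := by
      have : (t ^ m + (1 - t) ^ m) ^ p ^ j = 1 ^ p ^ j := by
        rw [add_pow_char_pow, one_pow, ← pow_mul, ← pow_mul, mul_comm, hfac, h]
      have := sub_eq_zero.mpr this
      rw [← sub_pow_char_pow] at this
      exact sub_eq_zero.mp (pow_eq_zero_iff (pow_ne_zero _ (Fact.out : p.Prime).ne_zero) |>.mp this)
    -- transfer to polynomials
    have hinj1 : Function.Injective (algebraMap (RatFunc (ZMod p)) k) :=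
      (algebraMap (RatFunc (ZMod p)) k).injective
    have hr : (RatFunc.X : RatFunc (ZMod p)) ^ m + (1 - RatFunc.X) ^ m = 1 := by
      apply hinj1
      simpa [map_add, map_pow, map_sub, map_one] using hk
    have hpoly : (Polynomial.X : Polynomial (ZMod p)) ^ m + (1 - Polynomial.X) ^ m = 1 := by
      apply RatFunc.algebraMap_injective (ZMod p)
      simpa [map_add, map_pow, map_sub, map_one, RatFunc.algebraMap_X] using hr
    have := aux_poly p m hpm hm0 hpoly
    exact ⟨j, by rw [← hfac, this, mul_one]⟩
  · rintro ⟨j, rfl⟩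
    rw [← add_pow_char_pow]
    simp
end

section
/- In characteristic p > 0, for every m ≥ 0, the identity t^{p^m} + (1−t)^{p^m} = 1 holds in F_p[t]; conversely, if n ≥ 1 is not a power of p then t^n + (1−t)^n ≠ 1 in F_p[t]. -/
open Polynomial

lemma coeff_one_sub_Xq_pow (p q r : ℕ) (hq : 1 ≤ q) (hr : 1 ≤ r) :
    ((1 - X ^ q : Polynomial (ZMod p)) ^ r).coeff q = -(r : ZMod p) := by
  have h1 : (1 - X ^ q : Polynomial (ZMod p)) ^ r
      = ∑ k ∈ Finset.range (r + 1),
        (-X ^ q : Polynomial (ZMod p)) ^ k * 1 ^ (r - k) * (r.choose k : Polynomial (ZMod p)) := by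
    rw [sub_eq_add_neg, add_comm, add_pow]
  rw [h1, finset_sum_coeff]
  rw [Finset.sum_eq_single 1]
  · simp
  · intro k hk hk1
    have : (-X ^ q : Polynomial (ZMod p)) ^ k * 1 ^ (r - k) * (r.choose k : Polynomial (ZMod p))
        = C ((-1) ^ k * (r.choose k : ZMod p)) * X ^ (q * k) := by
      rw [neg_pow, ← pow_mul, one_pow]
      simp only [map_mul, map_pow, map_neg, map_one, map_natCast]
      ring
    rw [this, coeff_C_mul, coeff_X_pow]
    have hne : q * k ≠ q := by
      rcases Nat.lt_or_ge k 1 with h | h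
      · have : k = 0 := by omega
        subst this; simpa using (by omega : ¬ (0 = q))
      · have : k ≥ 2 := by omega
        intro hqe
        nlinarith
    rw [if_neg (fun h => hne h.symm), mul_zero]
  · intro h
    simp at h
    omega

/-- In `F_p[t]`: `t^(p^m) + (1−t)^(p^m) = 1` for every `m ≥ 0`; conversely if `n ≥ 1`
is not a power of `p` then `t^n + (1−t)^n ≠ 1`. -/
theorem stmt1 (p : ℕ) (hp : p.Prime) :
    (∀ m : ℕ, (Polynomial.X : Polynomial (ZMod p)) ^ (p ^ m)
        + (1 - Polynomial.X) ^ (p ^ m) = 1) ∧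
    (∀ n : ℕ, 1 ≤ n → (¬ ∃ m : ℕ, n = p ^ m) →
      (Polynomial.X : Polynomial (ZMod p)) ^ n + (1 - Polynomial.X) ^ n ≠ 1) := by
  haveI : Fact p.Prime := ⟨hp⟩
  haveI : CharP (Polynomial (ZMod p)) p := by infer_instance
  constructor
  · intro m
    rw [← add_pow_char_pow]
    simp
  · intro n hn hpow heq
    set m := n.factorization p with hm
    set q := p ^ m with hqdef
    set r := n / q with hrdef
    have hq1 : 1 ≤ q := Nat.one_le_pow _ _ hp.pos
    have hn0 : n ≠ 0 := by omega
    have hqd : q ∣ n := Nat.ordProj_dvd n p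
    have hnq : n = q * r := (Nat.div_mul_cancel hqd).symm.trans (mul_comm _ _)
    have hpr : ¬ p ∣ r := Nat.not_dvd_ordCompl hp hn0
    have hr0 : r ≠ 0 := by
      intro h; rw [h, mul_zero] at hnq; exact hn0 hnq
    have hr1 : r ≠ 1 := by
      intro h
      exact hpow ⟨m, by rw [hnq, h, mul_one]⟩
    have hr2 : 2 ≤ r := (Nat.two_le_iff r).mpr ⟨hr0, hr1⟩
    -- rewrite (1 - X)^n = (1 - X^q)^r
    have hfrob : (1 - X : Polynomial (ZMod p)) ^ q = 1 - X ^ q := by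
      rw [hqdef, sub_pow_char_pow, one_pow]
    have heq2 : (X : Polynomial (ZMod p)) ^ n + (1 - X ^ q) ^ r = 1 := by
      rw [← hfrob, ← pow_mul, ← hnq]; exact heq
    have hc := congrArg (fun f => Polynomial.coeff f q) heq2
    rw [coeff_add, coeff_X_pow, coeff_one_sub_Xq_pow p q r hq1 (by omega)] at hc
    have hnq' : n ≠ q := by
      rw [hnq]; intro h
      nlinarith
    rw [if_neg (fun h => hnq' h.symm)] at hc
    rw [Polynomial.coeff_one] at hc
    have hq0 : q ≠ 0 := by omega
    rw [if_neg hq0] at hc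
    have : (r : ZMod p) = 0 := neg_eq_zero.mp (by simpa using hc)
    exact hpr ((ZMod.natCast_eq_zero_iff r p).mp this)
end

section
/- For a bounded linear operator Δ on a non-archimedean Banach space with ‖Δ‖ < R = p^{−1/(p−1)}, and for each i ≥ 0, the operator-valued binomial coefficient term B_i(T) := (T(T−1)⋯(T−i+1)/i!) Δ^i, viewed for T ranging over the closed unit disc (|T| ≤ 1), satisfies ‖B_i(T)‖ ≤ (‖Δ‖/R)^i; hence the series G(T) = Σ_{i≥0} B_i(T) converges uniformly in T with |T| ≤ 1 and defines, for each such T, a bounded operator with G(n) = (id + Δ)^n for every non-negative integer n. -/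
lemma aux_prod {k : Type*} [Field k] (n i : ℕ) :
    (∏ j ∈ Finset.range i, ((n : k) - (j : k))) = ((n.descFactorial i : ℕ) : k) := by
  induction i with
  | zero => simp
  | succ i ih =>
    rw [Finset.prod_range_succ, ih, Nat.descFactorial_succ]
    rcases le_or_gt i n with h | h
    · push_cast [Nat.cast_sub h]
      ring
    · rw [Nat.descFactorial_eq_zero_iff_lt.mpr h, Nat.cast_zero, mul_zero, zero_mul,
        Nat.cast_zero]

/-- Interpolation of iterates: for `‖Δ‖ < R = p^{−1/(p−1)}` and `‖T‖ ≤ 1`, the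
binomial terms `B_i(T) = (T(T−1)⋯(T−i+1)/i!) • Δ^i` satisfy `‖B_i(T)‖ ≤ (‖Δ‖/R)^i`,
the series `G(T) = Σ_i B_i(T)` converges, and `G(n) = (id + Δ)^n` for every `n ∈ ℕ`. -/
theorem stmt13 {k E : Type*} [NontriviallyNormedField k] [CompleteSpace k]
    [IsUltrametricDist k] [NormedAddCommGroup E] [NormedSpace k E] [CompleteSpace E]
    (p : ℕ) (hp : p.Prime) (hpk : ‖(p : k)‖ = (p : ℝ)⁻¹)
    (hfact : ∀ i : ℕ,
      ((p : ℝ) ^ (-(1 : ℝ) / ((p : ℝ) - 1))) ^ i ≤ ‖((i.factorial : ℕ) : k)‖)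
    (Δ : E →L[k] E) (hΔ : ‖Δ‖ < (p : ℝ) ^ (-(1 : ℝ) / ((p : ℝ) - 1))) :
    (∀ T : k, ‖T‖ ≤ 1 →
      (∀ i : ℕ,
        ‖((∏ j ∈ Finset.range i, (T - (j : k))) / ((i.factorial : ℕ) : k)) • Δ ^ i‖
          ≤ (‖Δ‖ / (p : ℝ) ^ (-(1 : ℝ) / ((p : ℝ) - 1))) ^ i) ∧
      Summable (fun i : ℕ =>
        ((∏ j ∈ Finset.range i, (T - (j : k))) / ((i.factorial : ℕ) : k)) • Δ ^ i)) ∧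
    (∀ n : ℕ,
      (∑' i : ℕ,
        ((∏ j ∈ Finset.range i, ((n : k) - (j : k))) / ((i.factorial : ℕ) : k)) • Δ ^ i)
        = (1 + Δ) ^ n) := by
  set R : ℝ := (p : ℝ) ^ (-(1 : ℝ) / ((p : ℝ) - 1)) with hRdef
  have hp0 : (0 : ℝ) < p := by exact_mod_cast hp.pos
  have hR0 : 0 < R := Real.rpow_pos_of_pos hp0 _
  have hfac0 : ∀ i : ℕ, ((i.factorial : ℕ) : k) ≠ 0 := by
    intro i h
    have := hfact i
    rw [h, norm_zero] at this
    exact absurd this (not_le.2 (pow_pos hR0 i))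
  have hpowle : ∀ i : ℕ, ‖Δ ^ i‖ ≤ ‖Δ‖ ^ i := by
    intro i
    cases i with
    | zero => simp only [pow_zero]; exact ContinuousLinearMap.norm_id_le
    | succ i => exact norm_pow_le' Δ i.succ_pos
  have key : ∀ T : k, ‖T‖ ≤ 1 → ∀ i : ℕ,
      ‖((∏ j ∈ Finset.range i, (T - (j : k))) / ((i.factorial : ℕ) : k)) • Δ ^ i‖
        ≤ (‖Δ‖ / R) ^ i := by
    intro T hT i
    have hprod : ‖∏ j ∈ Finset.range i, (T - (j : k))‖ ≤ 1 := by
      rw [norm_prod]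
      refine Finset.prod_le_one (fun j _ => norm_nonneg _) (fun j _ => ?_)
      rw [sub_eq_add_neg]
      exact le_trans (IsUltrametricDist.norm_add_le_max T (-(j : k)))
        (max_le hT (by simpa using IsUltrametricDist.norm_natCast_le_one k j))
    calc ‖((∏ j ∈ Finset.range i, (T - (j : k))) / ((i.factorial : ℕ) : k)) • Δ ^ i‖
        ≤ ‖(∏ j ∈ Finset.range i, (T - (j : k))) / ((i.factorial : ℕ) : k)‖ * ‖Δ ^ i‖ :=
          norm_smul_le _ _
      _ ≤ (1 / R ^ i) * ‖Δ‖ ^ i := by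
          apply mul_le_mul _ (hpowle i) (norm_nonneg _) (by positivity)
          rw [norm_div]
          exact div_le_div₀ zero_le_one hprod (pow_pos hR0 i) (hfact i)
      _ = (‖Δ‖ / R) ^ i := by rw [div_pow, one_div, inv_mul_eq_div]
  have hsum : ∀ T : k, ‖T‖ ≤ 1 → Summable (fun i : ℕ =>
      ((∏ j ∈ Finset.range i, (T - (j : k))) / ((i.factorial : ℕ) : k)) • Δ ^ i) := by
    intro T hT
    refine Summable.of_norm_bounded (g := fun i => (‖Δ‖ / R) ^ i) ?_ (key T hT)
    exact summable_geometric_of_lt_one (by positivity) ((div_lt_one hR0).mpr hΔ)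
  refine ⟨fun T hT => ⟨key T hT, hsum T hT⟩, fun n => ?_⟩
  have hcoef : ∀ i : ℕ,
      ((∏ j ∈ Finset.range i, ((n : k) - (j : k))) / ((i.factorial : ℕ) : k)) • Δ ^ i
        = (n.choose i) • Δ ^ i := by
    intro i
    rw [aux_prod, Nat.descFactorial_eq_factorial_mul_choose, Nat.cast_mul,
      mul_div_assoc, mul_comm, div_mul_cancel₀ _ (hfac0 i), Nat.cast_smul_eq_nsmul]
  have hsupp : ∀ i ∉ Finset.range (n + 1),
      ((∏ j ∈ Finset.range i, ((n : k) - (j : k))) / ((i.factorial : ℕ) : k)) • Δ ^ i = 0 := by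
    intro i hi
    rw [hcoef, Nat.choose_eq_zero_of_lt (by simpa using hi), zero_smul]
  rw [tsum_eq_sum hsupp]
  have := (Commute.one_right Δ).add_pow n
  rw [add_comm 1 Δ, this]
  refine Finset.sum_congr rfl (fun i hi => ?_)
  rw [hcoef, one_pow, mul_one, nsmul_eq_mul, (Nat.cast_commute (n.choose i) (Δ ^ i)).eq]
end
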